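/- arXiv:2603.01492 — 5 statements merged into one kernel-verified Lean document; each statement's English description precedes it below -/
import Mathlib

section
/- Let g, h1, h2 be continuous real-valued functions on open intervals such that g(A + B) = h1(A) + h2(B) for all A in a nondegenerate interval I1 and B in a nondegenerate interval I2. Then there exist constants β, α1, α2 ∈ ℝ such that g(s) = β s + (α1 + α2) for all s ∈ I1 + I2, h1(A) = β A + α1 for all A ∈ I1, and h2(B) = β B + α2 for all B ∈ I2. -/
open Set Pointwise

lemma Ioo_add_Ioo_eq (a₁ b₁ a₂ b₂ : ℝ) (h₁ : a₁ < b₁) (h₂ : a₂ < b₂) :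
    Ioo a₁ b₁ + Ioo a₂ b₂ = Ioo (a₁ + a₂) (b₁ + b₂) := by
  ext s
  constructor
  · rintro ⟨A, hA, B, hB, rfl⟩
    exact ⟨add_lt_add hA.1 hB.1, add_lt_add hA.2 hB.2⟩
  · intro hs
    have hlt : max a₁ (s - b₂) < min b₁ (s - a₂) := by
      rw [max_lt_iff, lt_min_iff, lt_min_iff]
      obtain ⟨hs1, hs2⟩ := hs
      exact ⟨⟨h₁, by linarith⟩, ⟨by linarith, by linarith⟩⟩
    obtain ⟨A, hA1, hA2⟩ := exists_between hlt
    rw [max_lt_iff] at hA1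
    rw [lt_min_iff] at hA2
    refine ⟨A, ⟨hA1.1, hA2.1⟩, s - A, ⟨by linarith [hA2.2], by linarith [hA1.2]⟩, by ring⟩

/-- Key analytic step: averaging the Pexider equation over a subinterval shows `h1` is
differentiable, with the same derivative serving as a derivative of `g` at sum points. -/
lemma pexider_aux (a₁ b₁ a₂ b₂ : ℝ) (h₁ : a₁ < b₁) (h₂ : a₂ < b₂)
    (g h1 h2 : ℝ → ℝ)
    (hg : ContinuousOn g (Ioo (a₁ + a₂) (b₁ + b₂)))
    (hh2 : ContinuousOn h2 (Ioo a₂ b₂))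
    (heq : ∀ A ∈ Ioo a₁ b₁, ∀ B ∈ Ioo a₂ b₂, g (A + B) = h1 A + h2 B) :
    ∀ A ∈ Ioo a₁ b₁, ∃ v : ℝ, HasDerivAt h1 v A ∧
      ∀ B ∈ Ioo a₂ b₂, HasDerivAt g v (A + B) := by
  set J : Set ℝ := Ioo (a₁ + a₂) (b₁ + b₂) with hJ
  set c : ℝ := a₂ + (b₂ - a₂) / 4 with hc_def
  set d : ℝ := b₂ - (b₂ - a₂) / 4 with hd_def
  have hc : c ∈ Ioo a₂ b₂ := ⟨by rw [hc_def]; linarith, by rw [hc_def]; linarith⟩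
  have hd : d ∈ Ioo a₂ b₂ := ⟨by rw [hd_def]; linarith, by rw [hd_def]; linarith⟩
  have hcd : c < d := by rw [hc_def, hd_def]; linarith
  have hmemJ : ∀ {A B : ℝ}, A ∈ Ioo a₁ b₁ → B ∈ Ioo a₂ b₂ → A + B ∈ J := by
    intro A B hA hB
    exact ⟨add_lt_add hA.1 hB.1, add_lt_add hA.2 hB.2⟩
  set s₀ : ℝ := ((a₁ + a₂) + (b₁ + b₂)) / 2 with hs₀_def
  have hs₀ : s₀ ∈ J := ⟨by rw [hs₀_def]; linarith, by rw [hs₀_def]; linarith⟩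
  set G : ℝ → ℝ := fun x => ∫ t in s₀..x, g t with hG_def
  have hgint : ∀ {x y : ℝ}, x ∈ J → y ∈ J → IntervalIntegrable g MeasureTheory.volume x y := by
    intro x y hx hy
    exact (hg.mono (Set.ordConnected_Ioo.uIcc_subset hx hy)).intervalIntegrable
  have hGderiv : ∀ x ∈ J, HasDerivAt G (g x) x := by
    intro x hx
    exact intervalIntegral.integral_hasDerivAt_right (hgint hs₀ hx)
      (hg.stronglyMeasurableAtFilter isOpen_Ioo x hx)
      (hg.continuousAt (isOpen_Ioo.mem_nhds hx))
  set C : ℝ := ∫ t in c..d, h2 t with hC_def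
  have hIccsub : uIcc c d ⊆ Ioo a₂ b₂ := Set.ordConnected_Ioo.uIcc_subset hc hd
  have hh2int : IntervalIntegrable h2 MeasureTheory.volume c d :=
    (hh2.mono hIccsub).intervalIntegrable
  -- the integral representation of h1
  have key : ∀ A ∈ Ioo a₁ b₁, h1 A = (G (A + d) - G (A + c) - C) / (d - c) := by
    intro A hA
    have e1 : (∫ t in c..d, g (t + A)) = ∫ t in (c + A)..(d + A), g t :=
      intervalIntegral.integral_comp_add_right (fun t => g t) A
    have e2 : (∫ t in c..d, g (t + A)) = ∫ t in c..d, (h1 A + h2 t) := by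
      apply intervalIntegral.integral_congr
      intro t ht
      have ht' : t ∈ Ioo a₂ b₂ := hIccsub ht
      show g (t + A) = h1 A + h2 t
      rw [add_comm t A]
      exact heq A hA t ht'
    have e3 : (∫ t in c..d, (h1 A + h2 t)) = (d - c) * h1 A + C := by
      rw [intervalIntegral.integral_add (intervalIntegrable_const) hh2int,
        intervalIntegral.integral_const, smul_eq_mul, hC_def]
    have hdA : d + A ∈ J := by rw [add_comm]; exact hmemJ hA hd
    have hcA : c + A ∈ J := by rw [add_comm]; exact hmemJ hA hc
    have e4 : G (d + A) - G (c + A) = ∫ t in (c + A)..(d + A), g t :=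
      intervalIntegral.integral_interval_sub_left (hgint hs₀ hdA) (hgint hs₀ hcA)
    have hne : d - c ≠ 0 := by linarith
    have : (d - c) * h1 A + C = G (d + A) - G (c + A) := by rw [e4, ← e1, e2, e3]
    rw [add_comm d A, add_comm c A] at this
    field_simp
    linarith
  intro A hA
  refine ⟨(g (A + d) - g (A + c)) / (d - c), ?_, ?_⟩
  · -- h1 has this derivative at A
    have hF : HasDerivAt (fun x => (G (x + d) - G (x + c) - C) / (d - c))
        ((g (A + d) - g (A + c)) / (d - c)) A := by
      have hd' : HasDerivAt (fun x => G (x + d)) (g (A + d)) A :=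
        HasDerivAt.comp_add_const A d (hGderiv (A + d) (hmemJ hA hd))
      have hc' : HasDerivAt (fun x => G (x + c)) (g (A + c)) A :=
        HasDerivAt.comp_add_const A c (hGderiv (A + c) (hmemJ hA hc))
      exact ((hd'.sub hc').sub_const C).div_const (d - c)
    apply hF.congr_of_eventuallyEq
    filter_upwards [isOpen_Ioo.mem_nhds hA] with x hx
    exact key x hx
  · -- g has the same derivative at A + B
    intro B hB
    obtain ⟨v, hv⟩ : ∃ v, v = (g (A + d) - g (A + c)) / (d - c) := ⟨_, rfl⟩
    rw [← hv]
    have hh1A : HasDerivAt h1 v A := by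
      rw [hv]
      have hF : HasDerivAt (fun x => (G (x + d) - G (x + c) - C) / (d - c))
          ((g (A + d) - g (A + c)) / (d - c)) A := by
        have hd' : HasDerivAt (fun x => G (x + d)) (g (A + d)) A :=
          HasDerivAt.comp_add_const A d (hGderiv (A + d) (hmemJ hA hd))
        have hc' : HasDerivAt (fun x => G (x + c)) (g (A + c)) A :=
          HasDerivAt.comp_add_const A c (hGderiv (A + c) (hmemJ hA hc))
        exact ((hd'.sub hc').sub_const C).div_const (d - c)
      apply hF.congr_of_eventuallyEq
      filter_upwards [isOpen_Ioo.mem_nhds hA] with x hx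
      exact key x hx
    have hF2 : HasDerivAt (fun s => h1 (s - B) + h2 B) v (A + B) := by
      have : HasDerivAt h1 v (A + B - B) := by rwa [add_sub_cancel_right]
      exact (HasDerivAt.comp_sub_const (A + B) B this).add_const (h2 B)
    apply hF2.congr_of_eventuallyEq
    have hopen : IsOpen (Ioo (a₁ + B) (b₁ + B)) := isOpen_Ioo
    have hmem : A + B ∈ Ioo (a₁ + B) (b₁ + B) :=
      ⟨by linarith [hA.1], by linarith [hA.2]⟩
    filter_upwards [hopen.mem_nhds hmem] with s hs
    have hsB : s - B ∈ Ioo a₁ b₁ := ⟨by linarith [hs.1], by linarith [hs.2]⟩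
    have := heq (s - B) hsB B hB
    rw [sub_add_cancel] at this
    exact this

lemma affine_of_hasDerivAt {a b β : ℝ} {f : ℝ → ℝ} {x₀ : ℝ} (hx₀ : x₀ ∈ Ioo a b)
    (hf : ∀ x ∈ Ioo a b, HasDerivAt f β x) :
    ∀ x ∈ Ioo a b, f x = β * x + (f x₀ - β * x₀) := by
  intro x hx
  have hsub : uIcc x₀ x ⊆ Ioo a b := Set.ordConnected_Ioo.uIcc_subset hx₀ hx
  have hint := intervalIntegral.integral_eq_sub_of_hasDerivAt
    (f := f) (f' := fun _ => β) (fun t ht => hf t (hsub ht)) intervalIntegrable_const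
  rw [intervalIntegral.integral_const, smul_eq_mul] at hint
  linear_combination -hint

/-- Pexider functional equation on intervals. -/
theorem pexider_on_intervals
    (a₁ b₁ a₂ b₂ : ℝ) (h₁ : a₁ < b₁) (h₂ : a₂ < b₂)
    (g h1 h2 : ℝ → ℝ)
    (hg : ContinuousOn g (Ioo a₁ b₁ + Ioo a₂ b₂))
    (hh1 : ContinuousOn h1 (Ioo a₁ b₁))
    (hh2 : ContinuousOn h2 (Ioo a₂ b₂))
    (heq : ∀ A ∈ Ioo a₁ b₁, ∀ B ∈ Ioo a₂ b₂, g (A + B) = h1 A + h2 B) :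
    ∃ β α₁ α₂ : ℝ,
      (∀ s ∈ Ioo a₁ b₁ + Ioo a₂ b₂, g s = β * s + (α₁ + α₂)) ∧
      (∀ A ∈ Ioo a₁ b₁, h1 A = β * A + α₁) ∧
      (∀ B ∈ Ioo a₂ b₂, h2 B = β * B + α₂) := by
  have hsum := Ioo_add_Ioo_eq a₁ b₁ a₂ b₂ h₁ h₂
  rw [hsum] at hg
  have hg' : ContinuousOn g (Ioo (a₂ + a₁) (b₂ + b₁)) := by
    rw [add_comm a₂ a₁, add_comm b₂ b₁]; exact hg
  have heq' : ∀ B ∈ Ioo a₂ b₂, ∀ A ∈ Ioo a₁ b₁, g (B + A) = h2 B + h1 A := by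
    intro B hB A hA
    rw [add_comm B A, heq A hA B hB, add_comm]
  have H1 := pexider_aux a₁ b₁ a₂ b₂ h₁ h₂ g h1 h2 hg hh2 heq
  have H2 := pexider_aux a₂ b₂ a₁ b₁ h₂ h₁ g h2 h1 hg' hh1 heq'
  set A₀ : ℝ := (a₁ + b₁) / 2 with hA₀_def
  set B₀ : ℝ := (a₂ + b₂) / 2 with hB₀_def
  have hA₀ : A₀ ∈ Ioo a₁ b₁ := ⟨by rw [hA₀_def]; linarith, by rw [hA₀_def]; linarith⟩
  have hB₀ : B₀ ∈ Ioo a₂ b₂ := ⟨by rw [hB₀_def]; linarith, by rw [hB₀_def]; linarith⟩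
  obtain ⟨β, hβ1, hβg⟩ := H1 A₀ hA₀
  have hderiv1 : ∀ A ∈ Ioo a₁ b₁, HasDerivAt h1 β A := by
    intro A hA
    obtain ⟨v, hv, hvg⟩ := H1 A hA
    obtain ⟨w, hw, hwg⟩ := H2 B₀ hB₀
    have e1 : v = w := by
      have h1' := hvg B₀ hB₀
      have h2' := hwg A hA
      rw [add_comm B₀ A] at h2'
      exact h1'.unique h2'
    have e2 : β = w := by
      have h1' := hβg B₀ hB₀
      have h2' := hwg A₀ hA₀
      rw [add_comm B₀ A₀] at h2'
      exact h1'.unique h2'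
    rw [e2] at *
    rwa [← e1]
  have hderiv2 : ∀ B ∈ Ioo a₂ b₂, HasDerivAt h2 β B := by
    intro B hB
    obtain ⟨w, hw, hwg⟩ := H2 B hB
    have e : β = w := by
      have h1' := hβg B hB
      have h2' := hwg A₀ hA₀
      rw [add_comm B A₀] at h2'
      exact h1'.unique h2'
    rwa [e]
  refine ⟨β, h1 A₀ - β * A₀, h2 B₀ - β * B₀, ?_, ?_, ?_⟩
  · intro s hs
    obtain ⟨A, hA, B, hB, rfl⟩ := hs
    rw [heq A hA B hB, affine_of_hasDerivAt hA₀ hderiv1 A hA,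
      affine_of_hasDerivAt hB₀ hderiv2 B hB]
    ring
  · exact affine_of_hasDerivAt hA₀ hderiv1
  · exact affine_of_hasDerivAt hB₀ hderiv2
end

section
/- Let σ(y, u) = −1/(∂ψ/∂y)(y, u) > 0 be the demand elasticity derived from an inverse demand function ψ, let φ(y, u) = y + ψ(y, u) with ∂φ/∂y > 0 and ∂φ/∂u > 0, and suppose (∂φ/∂y)² + ∂²φ/∂y² > 0. Define φₜ-revenue composed with the optimal material demand as Φ(m, u) = φ(f(m) + M⁻¹(m, u), u). Then ∂Φ/∂u > 0 if and only if (∂φ/∂u)(∂σ/∂y) > (∂φ/∂y)(∂σ/∂u). -/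
/-- Monotonicity of the reduced-form revenue function in the demand shock:
with `σy = φyy/(1−φy)²`, `σu = φyu/(1−φy)²`, the control-function derivative
`Minvu = −(φy·φu + φyu)/(φy² + φyy)` and `Φu = φy·Minvu + φu`, one has
`Φu > 0` if and only if `φu·σy > φy·σu`. -/
theorem revenue_monotonicity_iff
    (φy φu φyy φyu σy σu Minvu Φu : ℝ)
    (h1 : 0 < φy) (h2 : φy < 1) (h3 : 0 < φu)
    (hD : 0 < φy ^ 2 + φyy)
    (hσy : σy = φyy / (1 - φy) ^ 2)
    (hσu : σu = φyu / (1 - φy) ^ 2)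
    (hMinvu : Minvu = -((φy * φu + φyu) / (φy ^ 2 + φyy)))
    (hΦu : Φu = φy * Minvu + φu) :
    0 < Φu ↔ φy * σu < φu * σy := by
  have h2' : (0:ℝ) < 1 - φy := by linarith
  have hsq : (0:ℝ) < (1 - φy) ^ 2 := by positivity
  have hΦu' : Φu = (φu * φyy - φy * φyu) / (φy ^ 2 + φyy) := by
    rw [hΦu, hMinvu]; field_simp; ring
  rw [hΦu', hσy, hσu]
  rw [div_pos_iff]
  constructor
  · rintro (⟨hn, _⟩ | ⟨_, hd⟩)
    · rw [mul_div_assoc', mul_div_assoc', div_lt_div_iff₀ hsq hsq]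
      nlinarith
    · linarith
  · intro h
    left
    rw [mul_div_assoc', mul_div_assoc', div_lt_div_iff₀ hsq hsq] at h
    constructor
    · nlinarith
    · exact hD
end

section
/- Suppose the first-order condition for materials holds: ∂f/∂m = (∂φ⁻¹/∂r) · exp(pᵐ + m − r), and the chain-rule identity (∂φ⁻¹/∂r)·(∂Φ/∂m) = ∂f/∂m + ∂M⁻¹/∂m holds, where Φ(m,w,u) is the reduced-form revenue function. If ∂Φ/∂m ≠ exp(pᵐ + m − r), then the markup μ = ∂φ⁻¹/∂r is uniquely determined as μ = (∂M⁻¹/∂m) / (∂Φ/∂m − exp(pᵐ + m − r)). -/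
/-- Identification of the markup from the first-order condition for materials
and the chain-rule identity: `μ = (∂M⁻¹/∂m)/(∂Φ/∂m − exp(pᵐ + m − r))`. -/
theorem markup_from_foc
    (fm μ Φm Mm pm m r : ℝ)
    (hfoc : fm = μ * Real.exp (pm + m - r))
    (hchain : μ * Φm = fm + Mm)
    (hne : Φm ≠ Real.exp (pm + m - r)) :
    μ = Mm / (Φm - Real.exp (pm + m - r)) := by
  field_simp [sub_ne_zero.mpr hne]
  linarith [hchain, hfoc]
end

section
/- Let 𝔰(y, ε) = δ − (1/β)·ln((exp(−βy + γ) + ε)/(1 + ε)) with β > 0, ε > 0. Then the implied markup P/MC = (∂φ/∂y)⁻¹, where φ(y, ε) = Φ + 𝔰(y, ε), equals 1 + ε·exp(βy − γ). Moreover, as β → 0⁺ with y fixed, φ(y, ε) → Φ + δ + y/(1 + ε) (i.e., the CoPaTh revenue function converges to the CES revenue function with slope ρ = 1/(1+ε)). -/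
open Filter Topology

/-- CoPaTh-HSA revenue function: the implied markup is
`1 + ε·exp(βy − γ)`, and as `β → 0⁺` (with `γ = 0`) the revenue function
converges to the CES revenue function with slope `1/(1+ε)`. -/
theorem copath_markup_and_ces_limit
    (Φ δ : ℝ) (ε : ℝ) (hε : 0 < ε) (y : ℝ) :
    (∀ β γ : ℝ, 0 < β →
      HasDerivAt (fun y' => Φ + δ - (1 / β) *
          Real.log ((Real.exp (-β * y' + γ) + ε) / (1 + ε)))
        (Real.exp (-β * y + γ) / (Real.exp (-β * y + γ) + ε)) y ∧
      (Real.exp (-β * y + γ) / (Real.exp (-β * y + γ) + ε))⁻¹ =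
        1 + ε * Real.exp (β * y - γ)) ∧
    Tendsto (fun β : ℝ => Φ + δ - (1 / β) *
        Real.log ((Real.exp (-β * y) + ε) / (1 + ε)))
      (𝓝[>] 0) (𝓝 (Φ + δ + y / (1 + ε))) := by
  have h1ε : (0:ℝ) < 1 + ε := by linarith
  constructor
  · intro β γ hβ
    have hu : ∀ t : ℝ, (0:ℝ) < Real.exp (-β * t + γ) + ε := fun t => by
      positivity
    constructor
    · have hinner : HasDerivAt (fun y' : ℝ => Real.exp (-β * y' + γ) + ε)
          (Real.exp (-β * y + γ) * (-β)) y := by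
        have h0 : HasDerivAt (fun y' : ℝ => -β * y' + γ) (-β) y := by
          simpa using ((hasDerivAt_id y).const_mul (-β)).add_const γ
        simpa using (h0.exp.add_const ε)
      have hlog : HasDerivAt (fun y' : ℝ =>
          Real.log ((Real.exp (-β * y' + γ) + ε) / (1 + ε)))
          (Real.exp (-β * y + γ) * (-β) / (Real.exp (-β * y + γ) + ε)) y := by
        have heq : (fun y' : ℝ =>
            Real.log ((Real.exp (-β * y' + γ) + ε) / (1 + ε))) =
            fun y' : ℝ => Real.log (Real.exp (-β * y' + γ) + ε) - Real.log (1 + ε) := by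
          funext t
          rw [Real.log_div (ne_of_gt (hu t)) (ne_of_gt h1ε)]
        rw [heq]
        exact (hinner.log (ne_of_gt (hu y))).sub_const _
      have := ((hlog.const_mul (1/β)).const_sub (Φ + δ))
      convert this using 1
      case e'_9 =>
        have hβ' : β ≠ 0 := ne_of_gt hβ; have hu' : Real.exp (-β * y + γ) + ε ≠ 0 := ne_of_gt (hu y); field_simp
      all_goals rfl
    · have he : Real.exp (-β * y + γ) ≠ 0 := Real.exp_ne_zero _
      rw [show β * y - γ = -(-β * y + γ) by ring, Real.exp_neg]
      field_simp
  · set f : ℝ → ℝ := fun β => Real.log ((Real.exp (-β * y) + ε) / (1 + ε)) with hf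
    have hderiv : HasDerivAt f (-y / (1 + ε)) 0 := by
      have hinner : HasDerivAt (fun β : ℝ => Real.exp (-β * y) + ε)
          (-y) 0 := by
        have h0 : HasDerivAt (fun β : ℝ => -β * y) (-y) 0 := by
          have : HasDerivAt (fun β : ℝ => β * (-y)) (-y) 0 := by
            simpa using (hasDerivAt_id (0:ℝ)).mul_const (-y)
          convert this using 2; ring
        simpa using (h0.exp.add_const ε)
      have heq : f = fun β : ℝ =>
          Real.log (Real.exp (-β * y) + ε) - Real.log (1 + ε) := by
        funext t
        show Real.log ((Real.exp (-t * y) + ε) / (1 + ε)) = _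
        rw [Real.log_div (by positivity) (ne_of_gt h1ε)]
      rw [heq]
      have := (hinner.log (by positivity)).sub_const (Real.log (1 + ε))
      simpa using this
    have hslope := hasDerivAt_iff_tendsto_slope.mp hderiv
    have hf0 : f 0 = 0 := by
      simp [hf, div_self (ne_of_gt h1ε)]
    have hmain : Tendsto (fun β : ℝ => Φ + δ - slope f 0 β)
        (𝓝[≠] (0:ℝ)) (𝓝 (Φ + δ - (-y / (1 + ε)))) :=
      tendsto_const_nhds.sub hslope
    have hmono : 𝓝[>] (0:ℝ) ≤ 𝓝[≠] (0:ℝ) :=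
      nhdsWithin_mono _ (fun x hx => ne_of_gt hx)
    have := hmain.mono_left hmono
    have heq2 : ∀ᶠ β in 𝓝[>] (0:ℝ),
        Φ + δ - slope f 0 β = Φ + δ - (1 / β) * f β := by
      filter_upwards [self_mem_nhdsWithin] with β hβ
      have : slope f 0 β = (1 / β) * f β := by
        rw [slope_def_field, hf0]
        field_simp
        simp only [sub_zero]
      rw [this]
    have hfinal := this.congr' heq2
    convert hfinal using 2
    ring
end

section
/- Under the HDIA demand system, let Υ* satisfy ∂Υ*(x, z, u)/∂x = exp(υ*(x, z, u)) and suppose the adding-up constraint Σᵢ Υ*(yᵢ − a(y), zᵢ, uᵢ) = 1 holds at both the baseline state y and a new state ỹ. Define the reduced form υ(ζ, z, u) = υ*(ζ − a(y), z, u) − b(y). Then Σᵢ ∫_{yᵢ}^{ỹᵢ − Δa} exp(υ(ζ, zᵢ, uᵢ)) dζ = 0, where Δa = a(ỹ) − a(y); moreover, since each integrand is strictly positive, the left-hand side is strictly decreasing in Δa, so Δa is the unique root of this equation. -/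
open intervalIntegral

/-- HDIA aggregator: with `Υ` an antiderivative of `exp(υ)` in its first
argument and the adding-up constraint holding at both the baseline and the
new state, the sum of integrals of the reduced-form shares from `yᵢ` to
`ỹᵢ − Δa` vanishes; moreover the map in `d` is strictly decreasing, so
`Δa = a(ỹ) − a(y)` is its unique root. -/
theorem hdia_aggregator
    (N : ℕ) (hN : 0 < N)
    (Υ υ : ℝ → ℝ → ℝ → ℝ)
    (z u : Fin N → ℝ) (y ytil : Fin N → ℝ)
    (abase anew bconst : ℝ)
    (hderiv : ∀ (i : Fin N) (x : ℝ),
      HasDerivAt (fun x' => Υ x' (z i) (u i)) (Real.exp (υ x (z i) (u i))) x)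
    (hυc : ∀ i : Fin N, Continuous (fun x => υ x (z i) (u i)))
    (hbase : ∑ i, Υ (y i - abase) (z i) (u i) = 1)
    (hnew : ∑ i, Υ (ytil i - anew) (z i) (u i) = 1) :
    (∑ i, ∫ ζ in (y i)..(ytil i - (anew - abase)),
        Real.exp (υ (ζ - abase) (z i) (u i) - bconst)) = 0 ∧
    StrictAnti (fun d => ∑ i, ∫ ζ in (y i)..(ytil i - d),
        Real.exp (υ (ζ - abase) (z i) (u i) - bconst)) ∧
    ∀ d, (∑ i, ∫ ζ in (y i)..(ytil i - d),
        Real.exp (υ (ζ - abase) (z i) (u i) - bconst)) = 0 →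
      d = anew - abase := by
  -- Each integral evaluates via FTC.
  have key : ∀ (i : Fin N) (d : ℝ),
      (∫ ζ in (y i)..(ytil i - d), Real.exp (υ (ζ - abase) (z i) (u i) - bconst))
        = (Υ (ytil i - d - abase) (z i) (u i) - Υ (y i - abase) (z i) (u i))
            * Real.exp (-bconst) := by
    intro i d
    have hF : ∀ ζ : ℝ, HasDerivAt
        (fun ζ' => Υ (ζ' - abase) (z i) (u i) * Real.exp (-bconst))
        (Real.exp (υ (ζ - abase) (z i) (u i) - bconst)) ζ := by
      intro ζ
      have h1 : HasDerivAt (fun ζ' : ℝ => ζ' - abase) 1 ζ :=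
        (hasDerivAt_id ζ).sub_const abase
      have h2 := (hderiv i (ζ - abase)).comp ζ h1
      simp only [mul_one] at h2
      have h3 := h2.mul_const (Real.exp (-bconst))
      have : Real.exp (υ (ζ - abase) (z i) (u i)) * Real.exp (-bconst)
          = Real.exp (υ (ζ - abase) (z i) (u i) - bconst) := by
        rw [← Real.exp_add]; ring_nf
      rwa [this] at h3
    have hcont : Continuous (fun ζ => Real.exp (υ (ζ - abase) (z i) (u i) - bconst)) := by
      exact Real.continuous_exp.comp
        (((hυc i).comp (continuous_id.sub continuous_const)).sub continuous_const)
    have := intervalIntegral.integral_eq_sub_of_hasDerivAt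
      (a := y i) (b := ytil i - d)
      (f := fun ζ' => Υ (ζ' - abase) (z i) (u i) * Real.exp (-bconst))
      (fun ζ _ => hF ζ) (hcont.intervalIntegrable _ _)
    rw [this]; ring
  -- The sum as a closed form.
  have hsum : ∀ d : ℝ,
      (∑ i, ∫ ζ in (y i)..(ytil i - d),
        Real.exp (υ (ζ - abase) (z i) (u i) - bconst))
      = ((∑ i, Υ (ytil i - d - abase) (z i) (u i)) - 1) * Real.exp (-bconst) := by
    intro d
    calc (∑ i, ∫ ζ in (y i)..(ytil i - d),
            Real.exp (υ (ζ - abase) (z i) (u i) - bconst))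
        = ∑ i, (Υ (ytil i - d - abase) (z i) (u i) - Υ (y i - abase) (z i) (u i))
            * Real.exp (-bconst) := by
          exact Finset.sum_congr rfl fun i _ => key i d
      _ = ((∑ i, Υ (ytil i - d - abase) (z i) (u i))
            - (∑ i, Υ (y i - abase) (z i) (u i))) * Real.exp (-bconst) := by
          rw [← Finset.sum_mul, Finset.sum_sub_distrib]
      _ = _ := by rw [hbase]
  -- Υ is strictly monotone in its first argument.
  have hmono : ∀ i : Fin N, StrictMono (fun x => Υ x (z i) (u i)) := by
    intro i
    apply strictMono_of_deriv_pos
    intro x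
    rw [(hderiv i x).deriv]
    exact Real.exp_pos _
  have hanti : StrictAnti (fun d => ∑ i, ∫ ζ in (y i)..(ytil i - d),
      Real.exp (υ (ζ - abase) (z i) (u i) - bconst)) := by
    intro d1 d2 hd
    simp only [hsum]
    apply mul_lt_mul_of_pos_right _ (Real.exp_pos _)
    apply sub_lt_sub_right
    apply Finset.sum_lt_sum_of_nonempty
    · exact Finset.univ_nonempty_iff.mpr ⟨⟨0, hN⟩⟩
    · intro i _
      exact hmono i (by linarith)
  have hzero : (∑ i, ∫ ζ in (y i)..(ytil i - (anew - abase)),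
      Real.exp (υ (ζ - abase) (z i) (u i) - bconst)) = 0 := by
    rw [hsum]
    have : ∀ i : Fin N, ytil i - (anew - abase) - abase = ytil i - anew := by
      intro i; ring
    simp only [this, hnew, sub_self, zero_mul]
  refine ⟨hzero, hanti, fun d hdz => ?_⟩
  exact hanti.injective (hdz.trans hzero.symm)
end
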